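/- Let ζ̂ be a nonnegative random variable defined on the same probability space as (ζ,V) with ℙ(ζ̂ ≤ ζ) = 1, and suppose that for all s, u ∈ ℝ₊ and A ∈ 𝒮, ℙ(ζ̂ ≤ s, 0 < ζ − ζ̂ ≤ u, V ∈ A) = ℙ(ζ̂ ≤ s, ζ̂ < ζ)·(1 − e^{−γu})·μ(A). Then for every t ∈ ℝ₊ with ℙ(ζ̂ ≤ t, ζ > t) > 0, the conditional distribution of (ζ − t, V) given the event {ζ̂ ≤ t, ζ > t} equals ν_γ × μ. -/

import Mathlib

open MeasureTheory ProbabilityTheory Real Set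
open scoped ENNReal

/-- The exponential distribution on `[0, ∞)` with mean `γ⁻¹` (rate `γ`), as a measure on `ℝ`. -/
noncomputable def expν (γ : ℝ) : Measure ℝ :=
  MeasureTheory.volume.withDensity
    (fun x => if 0 ≤ x then ENNReal.ofReal (γ * Real.exp (-γ * x)) else 0)

lemma expν_eq_expMeasure (γ : ℝ) : expν γ = ProbabilityTheory.expMeasure γ := by
  rw [expν, ProbabilityTheory.expMeasure, ProbabilityTheory.gammaMeasure]
  congr 1
  funext x
  rw [show gammaPDF 1 γ x = exponentialPDF γ x from rfl, ProbabilityTheory.exponentialPDF_eq]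
  split_ifs with h
  · rw [neg_mul]
  · simp

lemma expν_prob {γ : ℝ} (hγ : 0 < γ) : IsProbabilityMeasure (expν γ) := by
  rw [expν_eq_expMeasure]
  exact ProbabilityTheory.isProbabilityMeasure_expMeasure hγ

lemma expν_Iic {γ : ℝ} (hγ : 0 < γ) (u : ℝ) :
    expν γ (Iic u) = ENNReal.ofReal (if 0 ≤ u then 1 - Real.exp (-(γ * u)) else 0) := by
  rw [expν_eq_expMeasure, ProbabilityTheory.expMeasure, ProbabilityTheory.gammaMeasure,
    withDensity_apply _ measurableSet_Iic]
  exact ProbabilityTheory.lintegral_exponentialPDF_eq_antiDeriv hγ u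

lemma expν_Ioc {γ : ℝ} (hγ : 0 < γ) {a b : ℝ} (ha : 0 ≤ a) (hab : a ≤ b) :
    expν γ (Ioc a b) = ENNReal.ofReal (Real.exp (-(γ * a)) - Real.exp (-(γ * b))) := by
  haveI := expν_prob hγ
  rw [← Iic_sdiff_Iic,
    measure_diff (Iic_subset_Iic.2 hab) measurableSet_Iic.nullMeasurableSet (measure_ne_top _ _),
    expν_Iic hγ, expν_Iic hγ, if_pos (ha.trans hab), if_pos ha,
    ← ENNReal.ofReal_sub _ (sub_nonneg.2 (Real.exp_le_one_iff.2
      (neg_nonpos.2 (mul_nonneg hγ.le ha))))]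
  congr 1
  ring

lemma expν_Ioi {γ : ℝ} (hγ : 0 < γ) {a : ℝ} (ha : 0 ≤ a) :
    expν γ (Ioi a) = ENNReal.ofReal (Real.exp (-(γ * a))) := by
  haveI := expν_prob hγ
  rw [← Set.compl_Iic, measure_compl measurableSet_Iic (measure_ne_top _ _), measure_univ,
    expν_Iic hγ, if_pos ha, ← ENNReal.ofReal_one,
    ← ENNReal.ofReal_sub _ (sub_nonneg.2 (Real.exp_le_one_iff.2
      (neg_nonpos.2 (mul_nonneg hγ.le ha))))]
  congr 1
  ring

/-- Theorem 3.2 (converse part): if `ℙ(ζ̂ ≤ ζ) = 1` and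
`ℙ(ζ̂ ≤ s, 0 < ζ − ζ̂ ≤ u, V ∈ A) = ℙ(ζ̂ ≤ s, ζ̂ < ζ)(1 − e^{−γu})μ(A)` for all `s, u, A`,
then for every `t` with `ℙ(ζ̂ ≤ t, ζ > t) > 0` the conditional law of `(ζ − t, V)` given
`{ζ̂ ≤ t, ζ > t}` is `ν_γ × μ`. -/
theorem stmt_8 {Ω : Type*} [MeasurableSpace Ω] (P : Measure Ω) [IsProbabilityMeasure P]
    {S : Type*} [MeasurableSpace S] (μ : Measure S) [IsProbabilityMeasure μ]
    (γ : ℝ) (hγ : 0 < γ)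
    (ζ : Ω → ℝ) (V : Ω → S) (hζm : Measurable ζ) (hVm : Measurable V)
    (hζ0 : ∀ ω, 0 ≤ ζ ω)
    (ζhat : Ω → ℝ) (hζhatm : Measurable ζhat) (hζhat0 : ∀ ω, 0 ≤ ζhat ω)
    (hle : P {ω | ζhat ω ≤ ζ ω} = 1)
    (hfact : ∀ s u : ℝ, 0 ≤ s → 0 ≤ u → ∀ A : Set S, MeasurableSet A →
      P {ω | ζhat ω ≤ s ∧ ζhat ω < ζ ω ∧ ζ ω - ζhat ω ≤ u ∧ V ω ∈ A} =
        P {ω | ζhat ω ≤ s ∧ ζhat ω < ζ ω} *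
          (ENNReal.ofReal (1 - Real.exp (-γ * u)) * μ A)) :
    ∀ t, 0 ≤ t → 0 < P {ω | ζhat ω ≤ t ∧ t < ζ ω} →
      Measure.map (fun ω => (ζ ω - t, V ω)) (P[|{ω | ζhat ω ≤ t ∧ t < ζ ω}]) =
        (expν γ).prod μ := by
  intro t ht hE
  haveI hprob := expν_prob hγ
  set E : Set Ω := {ω | ζhat ω ≤ t ∧ t < ζ ω} with hEdef
  have hEm : MeasurableSet E :=
    (measurableSet_le hζhatm measurable_const).inter (measurableSet_lt measurable_const hζm)
  set D : Set Ω := {ω | ζhat ω < ζ ω} with hDdef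
  have hDm : MeasurableSet D := measurableSet_lt hζhatm hζm
  set ρ : Measure ℝ := Measure.map ζhat (P.restrict D) with hρdef
  haveI : IsFiniteMeasure ρ := by
    rw [hρdef]; infer_instance
  set Φ : Ω → ℝ × ℝ := fun ω => (ζhat ω, ζ ω - ζhat ω) with hΦdef
  have hΦ : Measurable Φ := hζhatm.prodMk (hζm.sub hζhatm)
  have hgenR : MeasurableSpace.generateFrom (Set.range (Iic : ℝ → Set ℝ)) =
      (inferInstance : MeasurableSpace ℝ) := by
    rw [BorelSpace.measurable_eq (α := ℝ)]
    exact (borel_eq_generateFrom_Iic ℝ).symm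
  have hiUnion : (⋃ n : ℕ, Iic ((n : ℝ))) = univ := by
    refine eq_univ_of_forall fun x => ?_
    obtain ⟨n, hn⟩ := exists_nat_ge x
    exact mem_iUnion.2 ⟨n, hn⟩
  have hρIic : ∀ s : ℝ, ρ (Iic s) = P {ω | ζhat ω ≤ s ∧ ζhat ω < ζ ω} := by
    intro s
    rw [hρdef, Measure.map_apply hζhatm measurableSet_Iic,
      Measure.restrict_apply (hζhatm measurableSet_Iic)]
    rfl
  -- Step 1: factorization of the law of (ζhat, ζ - ζhat) on D ∩ V⁻¹' A
  have step1 : ∀ A : Set S, MeasurableSet A →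
      Measure.map Φ (P.restrict (D ∩ V ⁻¹' A)) = ((μ A) • ρ).prod (expν γ) := by
    intro A hA
    symm
    have hfin : (μ A • ρ) univ < ⊤ := by
      rw [Measure.smul_apply, smul_eq_mul]
      exact ENNReal.mul_lt_top (lt_of_le_of_lt prob_le_one ENNReal.one_lt_top)
        (measure_lt_top _ _)
    refine Measure.prod_eq_generateFrom hgenR hgenR isPiSystem_Iic isPiSystem_Iic
      ⟨fun n => Iic n, fun n => ⟨n, rfl⟩,
        fun n => lt_of_le_of_lt (measure_mono (subset_univ _)) hfin, hiUnion⟩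
      ⟨fun n => Iic n, fun n => ⟨n, rfl⟩,
        fun n => measure_lt_top _ _, hiUnion⟩ ?_
    rintro _ ⟨s, rfl⟩ _ ⟨u, rfl⟩
    rw [Measure.map_apply hΦ (measurableSet_Iic.prod measurableSet_Iic),
      Measure.restrict_apply (hΦ (measurableSet_Iic.prod measurableSet_Iic))]
    have hset : Φ ⁻¹' (Iic s ×ˢ Iic u) ∩ (D ∩ V ⁻¹' A) =
        {ω | ζhat ω ≤ s ∧ ζhat ω < ζ ω ∧ ζ ω - ζhat ω ≤ u ∧ V ω ∈ A} := by
      ext ω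
      simp only [Φ, D, mem_inter_iff, mem_preimage, mem_prod, mem_Iic, mem_setOf_eq]
      tauto
    rw [hset]
    by_cases hs : 0 ≤ s
    · by_cases hu : 0 ≤ u
      · rw [hfact s u hs hu A hA, Measure.smul_apply, smul_eq_mul, hρIic s,
          expν_Iic hγ, if_pos hu, neg_mul]
        ring
      · have h0 : {ω | ζhat ω ≤ s ∧ ζhat ω < ζ ω ∧ ζ ω - ζhat ω ≤ u ∧ V ω ∈ A} = ∅ := by
          ext ω
          simp only [mem_setOf_eq, mem_empty_iff_false, iff_false]
          rintro ⟨-, h1, h2, -⟩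
          linarith
        rw [h0, measure_empty, expν_Iic hγ, if_neg hu, ENNReal.ofReal_zero, mul_zero]
    · have h0 : {ω | ζhat ω ≤ s ∧ ζhat ω < ζ ω ∧ ζ ω - ζhat ω ≤ u ∧ V ω ∈ A} = ∅ := by
        ext ω
        simp only [mem_setOf_eq, mem_empty_iff_false, iff_false]
        rintro ⟨h1, -⟩
        linarith [hζhat0 ω]
      have h0' : {ω | ζhat ω ≤ s ∧ ζhat ω < ζ ω} = ∅ := by
        ext ω
        simp only [mem_setOf_eq, mem_empty_iff_false, iff_false]
        rintro ⟨h1, -⟩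
        linarith [hζhat0 ω]
      rw [h0, measure_empty, Measure.smul_apply, smul_eq_mul, hρIic s, h0', measure_empty,
        mul_zero, zero_mul]
  have hexpm : Measurable fun x : ℝ => ENNReal.ofReal (Real.exp (-(γ * (t - x)))) :=
    ENNReal.measurable_ofReal.comp
      (Real.measurable_exp.comp (((measurable_const.sub measurable_id).const_mul γ).neg))
  set I : ℝ≥0∞ :=
    ∫⁻ x, (Iic t).indicator (fun x => ENNReal.ofReal (Real.exp (-(γ * (t - x))))) x ∂ρ with hIdef
  -- P E = I
  have hmapD : Measure.map Φ (P.restrict D) = ρ.prod (expν γ) := by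
    have := step1 univ MeasurableSet.univ
    simpa using this
  have hPE : P E = I := by
    have hB' : MeasurableSet {p : ℝ × ℝ | p.1 ≤ t ∧ t < p.1 + p.2} :=
      (measurableSet_le measurable_fst measurable_const).inter
        (measurableSet_lt measurable_const (measurable_fst.add measurable_snd))
    have hEeq : E = Φ ⁻¹' {p : ℝ × ℝ | p.1 ≤ t ∧ t < p.1 + p.2} ∩ D := by
      ext ω
      simp only [E, D, Φ, mem_inter_iff, mem_preimage, mem_setOf_eq, add_sub_cancel]
      constructor
      · rintro ⟨h1, h2⟩; exact ⟨⟨h1, h2⟩, lt_of_le_of_lt h1 h2⟩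
      · rintro ⟨⟨h1, h2⟩, _⟩; exact ⟨h1, h2⟩
    rw [hEeq, ← Measure.restrict_apply (hΦ hB'), ← Measure.map_apply hΦ hB', hmapD,
      Measure.prod_apply hB']
    refine lintegral_congr fun x => ?_
    by_cases hx : x ≤ t
    · have : (Prod.mk x ⁻¹' {p : ℝ × ℝ | p.1 ≤ t ∧ t < p.1 + p.2}) = Ioi (t - x) := by
        ext y
        simp only [mem_preimage, mem_setOf_eq, mem_Ioi]
        constructor
        · rintro ⟨_, h⟩; linarith
        · intro h; exact ⟨hx, by linarith⟩
      rw [this, expν_Ioi hγ (by linarith), indicator_of_mem (mem_Iic.2 hx)]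
    · have : (Prod.mk x ⁻¹' {p : ℝ × ℝ | p.1 ≤ t ∧ t < p.1 + p.2}) = ∅ := by
        ext y
        simp only [mem_preimage, mem_setOf_eq, mem_empty_iff_false, iff_false, not_and]
        intro h; exact absurd h hx
      rw [this, measure_empty, indicator_of_notMem (by simpa using hx)]
  -- Step 2: the key computation
  have key : ∀ u : ℝ, 0 ≤ u → ∀ A : Set S, MeasurableSet A →
      P {ω | ζhat ω ≤ t ∧ t < ζ ω ∧ ζ ω - t ≤ u ∧ V ω ∈ A} =
        μ A * (ENNReal.ofReal (1 - Real.exp (-(γ * u))) * P E) := by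
    intro u hu A hA
    have hBu : MeasurableSet {p : ℝ × ℝ | p.1 ≤ t ∧ t < p.1 + p.2 ∧ p.1 + p.2 ≤ t + u} :=
      (measurableSet_le measurable_fst measurable_const).inter
        ((measurableSet_lt measurable_const (measurable_fst.add measurable_snd)).inter
          (measurableSet_le (measurable_fst.add measurable_snd) measurable_const))
    have hGeq : {ω | ζhat ω ≤ t ∧ t < ζ ω ∧ ζ ω - t ≤ u ∧ V ω ∈ A} =
        Φ ⁻¹' {p : ℝ × ℝ | p.1 ≤ t ∧ t < p.1 + p.2 ∧ p.1 + p.2 ≤ t + u} ∩ (D ∩ V ⁻¹' A) := by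
      ext ω
      simp only [Φ, D, mem_inter_iff, mem_preimage, mem_setOf_eq, add_sub_cancel]
      constructor
      · rintro ⟨h1, h2, h3, h4⟩
        exact ⟨⟨h1, h2, by linarith⟩, lt_of_le_of_lt h1 h2, h4⟩
      · rintro ⟨⟨h1, h2, h3⟩, _, h4⟩
        exact ⟨h1, h2, by linarith, h4⟩
    rw [hGeq, ← Measure.restrict_apply (hΦ hBu), ← Measure.map_apply hΦ hBu, step1 A hA,
      Measure.prod_apply hBu, lintegral_smul_measure, smul_eq_mul]
    have hsec : (fun x => expν γ
        (Prod.mk x ⁻¹' {p : ℝ × ℝ | p.1 ≤ t ∧ t < p.1 + p.2 ∧ p.1 + p.2 ≤ t + u})) =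
        fun x => ENNReal.ofReal (1 - Real.exp (-(γ * u))) *
          (Iic t).indicator (fun x => ENNReal.ofReal (Real.exp (-(γ * (t - x))))) x := by
      funext x
      by_cases hx : x ≤ t
      · have hpre : (Prod.mk x ⁻¹' {p : ℝ × ℝ | p.1 ≤ t ∧ t < p.1 + p.2 ∧ p.1 + p.2 ≤ t + u}) =
            Ioc (t - x) (t + u - x) := by
          ext y
          simp only [mem_preimage, mem_setOf_eq, mem_Ioc]
          constructor
          · rintro ⟨_, h2, h3⟩; exact ⟨by linarith, by linarith⟩
          · rintro ⟨h2, h3⟩; exact ⟨hx, by linarith, by linarith⟩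
        rw [hpre, expν_Ioc hγ (by linarith) (by linarith), indicator_of_mem (mem_Iic.2 hx),
          ← ENNReal.ofReal_mul (sub_nonneg.2 (Real.exp_le_one_iff.2
            (neg_nonpos.2 (mul_nonneg hγ.le hu))))]
        congr 1
        have : γ * (t + u - x) = γ * (t - x) + γ * u := by ring
        rw [this, neg_add, Real.exp_add]
        ring
      · have hpre : (Prod.mk x ⁻¹' {p : ℝ × ℝ | p.1 ≤ t ∧ t < p.1 + p.2 ∧ p.1 + p.2 ≤ t + u}) =
            (∅ : Set ℝ) := by
          ext y
          simp only [mem_preimage, mem_setOf_eq, mem_empty_iff_false, iff_false, not_and]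
          intro h; exact absurd h hx
        rw [hpre, measure_empty, indicator_of_notMem (by simpa using hx), mul_zero]
    rw [hsec, lintegral_const_mul _ (hexpm.indicator measurableSet_Iic), ← hIdef, hPE]
  -- Step 3: conclude
  have hPE0 : P E ≠ 0 := hE.ne'
  have hPEtop : P E ≠ ⊤ := measure_ne_top _ _
  have hmapm : Measurable fun ω => (ζ ω - t, V ω) := (hζm.sub measurable_const).prodMk hVm
  symm
  refine Measure.prod_eq_generateFrom hgenR MeasurableSpace.generateFrom_measurableSet
    isPiSystem_Iic MeasurableSpace.isPiSystem_measurableSet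
    ⟨fun n => Iic n, fun n => ⟨n, rfl⟩, fun n => measure_lt_top _ _, hiUnion⟩
    ⟨fun _ => univ, fun _ => MeasurableSet.univ, fun _ => measure_lt_top _ _, iUnion_const _⟩ ?_
  rintro _ ⟨u, rfl⟩ A hA
  rw [Measure.map_apply hmapm (measurableSet_Iic.prod hA),
    ProbabilityTheory.cond_apply hEm P]
  by_cases hu : 0 ≤ u
  · have hset : E ∩ ((fun ω => (ζ ω - t, V ω)) ⁻¹' (Iic u ×ˢ A)) =
        {ω | ζhat ω ≤ t ∧ t < ζ ω ∧ ζ ω - t ≤ u ∧ V ω ∈ A} := by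
      ext ω
      simp only [E, mem_inter_iff, mem_preimage, mem_prod, mem_Iic, mem_setOf_eq]
      tauto
    rw [hset, key u hu A hA, expν_Iic hγ, if_pos hu]
    calc (P E)⁻¹ * (μ A * (ENNReal.ofReal (1 - Real.exp (-(γ * u))) * P E))
        = (ENNReal.ofReal (1 - Real.exp (-(γ * u))) * μ A) * (P E * (P E)⁻¹) := by ring
      _ = ENNReal.ofReal (1 - Real.exp (-(γ * u))) * μ A := by
          rw [ENNReal.mul_inv_cancel hPE0 hPEtop, mul_one]
  · have hset : E ∩ ((fun ω => (ζ ω - t, V ω)) ⁻¹' (Iic u ×ˢ A)) = ∅ := by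
      ext ω
      simp only [E, mem_inter_iff, mem_preimage, mem_prod, mem_Iic, mem_setOf_eq,
        mem_empty_iff_false, iff_false]
      rintro ⟨⟨h1, h2⟩, h3, -⟩
      exact hu (by linarith)
    rw [hset, measure_empty, mul_zero, expν_Iic hγ, if_neg hu, ENNReal.ofReal_zero, zero_mul]
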